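/- A directed graph on a finite candidate set is the strict majority graph of some pair of weak orders if and only if it is the strict majority graph of some pair of linear orders. Concretely: for any two weak orders v_1, v_2 on a finite set C, there exist two linear orders v'_1, v'_2 on C such that for all distinct a, b ∈ C, the number of voters among {v'_1, v'_2} strictly preferring a to b exceeds the number strictly preferring b to a if and only if the same holds for {v_1, v_2}. -/
import Mathlib


/-- Strict preference induced by a (weak-order) relation. -/
def StrictPref {C : Type*} (v : C → C → Prop) (a b : C) : Prop := v a b ∧ ¬ v b a

open scoped Classical in
/-- Number of the two voters `v₁, v₂` strictly preferring `a` to `b`. -/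
noncomputable def twoVoterCount {C : Type*} (v₁ v₂ : C → C → Prop) (a b : C) : ℕ :=
  (if StrictPref v₁ a b then 1 else 0) + (if StrictPref v₂ a b then 1 else 0)

section Lex

variable {C : Type*}

/-- Lexicographic refinement of a total preorder `v` by a tie-breaker `R`. -/
def lex2 (v R : C → C → Prop) (a b : C) : Prop :=
  StrictPref v a b ∨ (v a b ∧ v b a ∧ R a b)

lemma strict_of_strict_strict {v : C → C → Prop} (hv : Transitive v)
    {a b c : C} (h1 : StrictPref v a b) (h2 : StrictPref v b c) : StrictPref v a c :=
  ⟨hv h1.1 h2.1, fun h => h2.2 (hv h h1.1)⟩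

lemma strict_of_strict_tie {v : C → C → Prop} (hv : Transitive v)
    {a b c : C} (h1 : StrictPref v a b) (h2 : v b c ∧ v c b) : StrictPref v a c :=
  ⟨hv h1.1 h2.1, fun h => h1.2 (hv h2.1 h)⟩

lemma strict_of_tie_strict {v : C → C → Prop} (hv : Transitive v)
    {a b c : C} (h1 : v a b ∧ v b a) (h2 : StrictPref v b c) : StrictPref v a c :=
  ⟨hv h1.1 h2.1, fun h => h2.2 (hv h h1.1)⟩

lemma lex2_trans {v R : C → C → Prop} (hv : Transitive v) (hR : Transitive R) :
    Transitive (lex2 v R) := by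
  intro a b c hab hbc
  rcases hab with h1 | ⟨h1, h1', h1R⟩ <;> rcases hbc with h2 | ⟨h2, h2', h2R⟩
  · exact Or.inl (strict_of_strict_strict hv h1 h2)
  · exact Or.inl (strict_of_strict_tie hv h1 ⟨h2, h2'⟩)
  · exact Or.inl (strict_of_tie_strict hv ⟨h1, h1'⟩ h2)
  · exact Or.inr ⟨hv h1 h2, hv h2' h1', hR h1R h2R⟩

lemma lex2_total {v R : C → C → Prop} (hv : Total v) (hR : Total R) :
    Total (lex2 v R) := by
  intro a b
  by_cases hab : v a b <;> by_cases hba : v b a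
  · rcases hR a b with h | h
    · exact Or.inl (Or.inr ⟨hab, hba, h⟩)
    · exact Or.inr (Or.inr ⟨hba, hab, h⟩)
  · exact Or.inl (Or.inl ⟨hab, hba⟩)
  · exact Or.inr (Or.inl ⟨hba, hab⟩)
  · rcases hv a b with h | h <;> [exact absurd h hab; exact absurd h hba]

lemma lex2_antisymm {v R : C → C → Prop} (hR : AntiSymmetric R) :
    AntiSymmetric (lex2 v R) := by
  intro a b hab hba
  rcases hab with h1 | ⟨h1, h1', h1R⟩ <;> rcases hba with h2 | ⟨h2, h2', h2R⟩
  · exact absurd h2.1 h1.2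
  · exact absurd h2 h1.2
  · exact absurd h1 h2.2
  · exact hR h1R h2R

lemma count_gt_iff {C : Type*} (u₁ u₂ : C → C → Prop) (a b : C)
    (hx₁ : ¬ (StrictPref u₁ a b ∧ StrictPref u₁ b a))
    (hx₂ : ¬ (StrictPref u₂ a b ∧ StrictPref u₂ b a)) :
    twoVoterCount u₁ u₂ a b > twoVoterCount u₁ u₂ b a ↔
      ((StrictPref u₁ a b ∧ ¬ StrictPref u₂ b a) ∨
       (StrictPref u₂ a b ∧ ¬ StrictPref u₁ b a)) := by
  classical
  unfold twoVoterCount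
  by_cases h1 : StrictPref u₁ a b <;> by_cases h2 : StrictPref u₂ a b <;>
    by_cases h3 : StrictPref u₁ b a <;> by_cases h4 : StrictPref u₂ b a <;>
      simp [h1, h2, h3, h4] at *

end Lex

set_option maxHeartbeats 1000000 in
theorem majority_graph_two_weak_orders_iff_two_total_orders
    {C : Type*} [Fintype C]
    (v₁ v₂ : C → C → Prop)
    (h₁trans : Transitive v₁) (h₁total : Total v₁)
    (h₂trans : Transitive v₂) (h₂total : Total v₂) :
    ∃ v₁' v₂' : C → C → Prop,
      Transitive v₁' ∧ Total v₁' ∧ AntiSymmetric v₁' ∧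
      Transitive v₂' ∧ Total v₂' ∧ AntiSymmetric v₂' ∧
      ∀ a b : C, a ≠ b →
        (twoVoterCount v₁' v₂' a b > twoVoterCount v₁' v₂' b a ↔
         twoVoterCount v₁ v₂ a b > twoVoterCount v₁ v₂ b a) := by
  classical
  -- a background linear order on C
  obtain ⟨e⟩ := (Fintype.truncEquivFin C)
  set L : C → C → Prop := fun a b => e a ≤ e b with hLdef
  have hLtrans : Transitive L := fun a b c h1 h2 => le_trans h1 h2
  have hLtotal : Total L := fun a b => le_total (e a) (e b)
  have hLanti : AntiSymmetric L := fun a b h1 h2 => e.injective (le_antisymm h1 h2)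
  set L' : C → C → Prop := fun a b => L b a with hL'def
  have hL'trans : Transitive L' := fun a b c h1 h2 => hLtrans h2 h1
  have hL'total : Total L' := fun a b => (hLtotal b a)
  have hL'anti : AntiSymmetric L' := fun a b h1 h2 => hLanti h2 h1
  -- the two linear orders
  refine ⟨lex2 v₁ (lex2 v₂ L), lex2 v₂ (lex2 v₁ L'), ?_, ?_, ?_, ?_, ?_, ?_, ?_⟩
  · exact lex2_trans h₁trans (lex2_trans h₂trans hLtrans)
  · exact lex2_total h₁total (lex2_total h₂total hLtotal)
  · exact lex2_antisymm (lex2_antisymm hLanti)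
  · exact lex2_trans h₂trans (lex2_trans h₁trans hL'trans)
  · exact lex2_total h₂total (lex2_total h₁total hL'total)
  · exact lex2_antisymm (lex2_antisymm hL'anti)
  · intro a b hab
    set w₁ := lex2 v₁ (lex2 v₂ L) with hw₁
    set w₂ := lex2 v₂ (lex2 v₁ L') with hw₂
    have hw₁trans : Transitive w₁ := lex2_trans h₁trans (lex2_trans h₂trans hLtrans)
    have hw₁total : Total w₁ := lex2_total h₁total (lex2_total h₂total hLtotal)
    have hw₁anti : AntiSymmetric w₁ := lex2_antisymm (lex2_antisymm hLanti)
    have hw₂total : Total w₂ := lex2_total h₂total (lex2_total h₁total hL'total)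
    have hw₂anti : AntiSymmetric w₂ := lex2_antisymm (lex2_antisymm hL'anti)
    -- For a linear order, strict pref on distinct elements is the order itself
    have hs₁ : ∀ x y : C, x ≠ y → (StrictPref w₁ x y ↔ w₁ x y) := fun x y hxy =>
      ⟨fun h => h.1, fun h => ⟨h, fun h' => hxy (hw₁anti h h')⟩⟩
    have hs₂ : ∀ x y : C, x ≠ y → (StrictPref w₂ x y ↔ w₂ x y) := fun x y hxy =>
      ⟨fun h => h.1, fun h => ⟨h, fun h' => hxy (hw₂anti h h')⟩⟩
    have hx₁ : ¬ (w₁ a b ∧ w₁ b a) := fun h => hab (hw₁anti h.1 h.2)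
    have hx₂ : ¬ (w₂ a b ∧ w₂ b a) := fun h => hab (hw₂anti h.1 h.2)
    have key : twoVoterCount w₁ w₂ a b > twoVoterCount w₁ w₂ b a ↔ (w₁ a b ∧ w₂ a b) := by
      unfold twoVoterCount
      rw [if_congr (hs₁ a b hab) rfl rfl, if_congr (hs₁ b a hab.symm) rfl rfl,
          if_congr (hs₂ a b hab) rfl rfl, if_congr (hs₂ b a hab.symm) rfl rfl]
      rcases hw₁total a b with h1 | h1 <;> rcases hw₂total a b with h2 | h2 <;>
        simp_all
    rw [key]
    -- now a case analysis on the original weak orders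
    have hLab : L a b ↔ ¬ L b a := by
      constructor
      · intro h h'; exact hab (hLanti h h')
      · intro h; rcases hLtotal a b with h' | h' <;> [exact h'; exact absurd h' h]
    rw [count_gt_iff v₁ v₂ a b (fun h => h.1.2 h.2.1) (fun h => h.1.2 h.2.1)]
    have ht₁ := h₁total a b
    have ht₂ := h₂total a b
    clear key hs₁ hs₂ hx₁ hx₂ hw₁trans hw₁total hw₁anti hw₂total hw₂anti
    clear hLtrans hLtotal hLanti hL'trans hL'total hL'anti h₁trans h₂trans h₁total h₂total
    simp only [hw₁, hw₂, hL'def, lex2, StrictPref]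
    clear hw₁ hw₂
    tauto
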